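/- Let (X,f) be a compact metrizable zero-dimensional homeomorphic system, L ≥ 1 an integer, and ε > 0. Suppose (X,f) admits, for the sequence ℓ_n := L + n, an (ℓ_n)-periodicity-regulated decomposition at some level: i.e., X is partitioned into finitely many disjoint towers f^i(B_e), e ∈ E, 0 ≤ i < l(e), each floor of diameter ≤ ε, such that every tower of height l(e) ≤ L contains a periodic point of least period l(e). Then there exists a clopen set F ⊆ X such that f^i(F), 0 ≤ i ≤ L, are pairwise disjoint, and every x ∉ ⋃_{-L ≤ i ≤ L} f^i(F) lies within distance ε of a periodic point of period ≤ L. -/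

import Mathlib

private lemma krieger_iter_clopen {X : Type*} [TopologicalSpace X] (f : X ≃ₜ X) (s : Set X)
    (h : IsClopen s) (n : ℕ) : IsClopen ((f : X → X)^[n] '' s) := by
  induction n with
  | zero => simpa
  | succ n ih =>
    rw [Function.iterate_succ', Function.comp_def, ← Set.image_image]
    have : (f : X → X) '' ((f : X → X)^[n] '' s) = f.symm ⁻¹' ((f : X → X)^[n] '' s) :=
      f.toEquiv.image_eq_preimage_symm _
    rw [this]
    exact ih.preimage f.symm.continuous

private lemma krieger_zpow_apply {X : Type*} [TopologicalSpace X] (f : X ≃ₜ X) (n : ℕ) (x : X) :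
    (f.toEquiv ^ (n : ℤ)) x = (f : X → X)^[n] x := by
  rw [zpow_natCast, Equiv.Perm.coe_pow]
  rfl

private lemma krieger_arith (L s s' a b i j : ℕ) (h1 : s + (L+1)*a = s' + (L+1)*b)
    (h2 : i + s = j + s') (hi : i ≤ L) (hj : j ≤ L) : i = j ∧ s = s' := by
  rcases le_total a b with h | h
  · obtain ⟨t, rfl⟩ := Nat.le.dest h
    rw [Nat.mul_add] at h1
    rcases Nat.eq_zero_or_pos t with rfl | ht
    · omega
    · have : L + 1 ≤ (L+1)*t := Nat.le_mul_of_pos_right _ ht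
      omega
  · obtain ⟨t, rfl⟩ := Nat.le.dest h
    rw [Nat.mul_add] at h1
    rcases Nat.eq_zero_or_pos t with rfl | ht
    · omega
    · have : L + 1 ≤ (L+1)*t := Nat.le_mul_of_pos_right _ ht
      omega

/-- An analogue of Krieger's marker lemma: from an `(L+n)`-periodicity-regulated tower
decomposition with floors of diameter at most `ε`, one obtains a clopen marker set `F`
with `f^i(F)`, `0 ≤ i ≤ L`, pairwise disjoint, such that every point outside
`⋃_{-L ≤ i ≤ L} f^i(F)` is within `ε` of a periodic point of period at most `L`. -/
theorem stmt7 {X : Type*} [MetricSpace X] [CompactSpace X] [TotallyDisconnectedSpace X]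
    (f : X ≃ₜ X) (L : ℕ) (hL : 1 ≤ L) (ε : ℝ) (hε : 0 < ε)
    (E : Type) [Fintype E] (B : E → Set X) (l : E → ℕ)
    (hclopen : ∀ e, IsClopen (B e)) (hpos : ∀ e, 0 < l e)
    (hdisj : ∀ e i e' i', i < l e → i' < l e' → (e, i) ≠ (e', i') →
      Disjoint ((f : X → X)^[i] '' B e) ((f : X → X)^[i'] '' B e'))
    (hcover : (⋃ e, ⋃ i ∈ Finset.range (l e), (f : X → X)^[i] '' B e) = Set.univ)
    (hdiam : ∀ e i, i < l e → Metric.diam ((f : X → X)^[i] '' B e) ≤ ε)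
    (hper : ∀ e, l e ≤ L →
      ∃ p ∈ ⋃ i ∈ Finset.range (l e), (f : X → X)^[i] '' B e,
        (f : X → X)^[l e] p = p ∧ ∀ j, 0 < j → j < l e → (f : X → X)^[j] p ≠ p) :
    ∃ F : Set X, IsClopen F ∧
      (∀ i j, i ≤ L → j ≤ L → i ≠ j →
        Disjoint ((f : X → X)^[i] '' F) ((f : X → X)^[j] '' F)) ∧
      ∀ x : X, x ∉ (⋃ i ∈ Finset.Icc (-(L : ℤ)) (L : ℤ), (f.toEquiv ^ i) '' F) →
        ∃ p : X, (∃ k, 1 ≤ k ∧ k ≤ L ∧ (f : X → X)^[k] p = p) ∧ dist x p ≤ ε := by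
  classical
  set P : E → ℕ → Prop :=
    fun e s => L < l e ∧ s ≤ l e - 1 - L ∧ (L + 1) ∣ (l e - 1 - L - s) with hP
  set F : Set X :=
    ⋃ e, ⋃ s ∈ Finset.filter (fun s => P e s) (Finset.range (l e)),
      (f : X → X)^[s] '' B e with hFdef
  have hmemF : ∀ e s, s < l e → P e s → (f : X → X)^[s] '' B e ⊆ F := by
    intro e s hsl hPs y hy
    rw [hFdef]
    refine Set.mem_iUnion.mpr ⟨e, ?_⟩
    exact Set.mem_biUnion (Finset.mem_filter.mpr ⟨Finset.mem_range.mpr hsl, hPs⟩) hy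
  refine ⟨F, ?_, ?_, ?_⟩
  · exact isClopen_iUnion_of_finite fun e =>
      isClopen_biUnion_finset fun s _ => krieger_iter_clopen f _ (hclopen e) s
  · intro i j hi hj hij
    rw [Set.disjoint_left]
    rintro x ⟨y, hy, rfl⟩ ⟨y', hy', heq⟩
    rw [hFdef] at hy hy'
    simp only [Set.mem_iUnion, Finset.mem_filter, Finset.mem_range] at hy hy'
    obtain ⟨e, s, ⟨hsl, hPs⟩, b, hb, rfl⟩ := hy
    obtain ⟨e', s', ⟨hsl', hPs'⟩, b', hb', rfl⟩ := hy'
    have h1 : (f : X → X)^[i + s] b = (f : X → X)^[i] ((f : X → X)^[s] b) :=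
      Function.iterate_add_apply _ i s b
    have h2 : (f : X → X)^[j + s'] b' = (f : X → X)^[j] ((f : X → X)^[s'] b') :=
      Function.iterate_add_apply _ j s' b'
    have hne : (e, i + s) ≠ (e', j + s') := by
      intro hpair
      simp only [Prod.mk.injEq] at hpair
      obtain ⟨rfl, hsum⟩ := hpair
      obtain ⟨hlt, hsle, a, ha⟩ := hPs
      obtain ⟨_, hsle', a', ha'⟩ := hPs'
      have hA : (l e - 1 - L - s) + s = l e - 1 - L := Nat.sub_add_cancel hsle
      have hA' : (l e - 1 - L - s') + s' = l e - 1 - L := Nat.sub_add_cancel hsle'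
      rw [ha] at hA
      rw [ha'] at hA'
      have hkey : s + (L+1)*a = s' + (L+1)*a' := by linarith
      obtain ⟨hij', -⟩ := krieger_arith L s s' a a' i j hkey hsum hi hj
      exact hij hij'
    have hdj := hdisj e (i + s) e' (j + s')
      (by obtain ⟨hlt, hsle, -⟩ := hPs; omega)
      (by obtain ⟨hlt, hsle, -⟩ := hPs'; omega) hne
    exact Set.disjoint_left.mp hdj ⟨b, hb, h1⟩ ⟨b', hb', h2.trans heq⟩
  · intro x hx
    have hxU : x ∈ (⋃ e, ⋃ i ∈ Finset.range (l e), (f : X → X)^[i] '' B e) := by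
      rw [hcover]; exact Set.mem_univ x
    simp only [Set.mem_iUnion, Finset.mem_range] at hxU
    obtain ⟨e, m, hm, b, hb, hbx⟩ := hxU
    by_cases hle : l e ≤ L
    · -- short tower: find a periodic point in the same floor
      obtain ⟨p, hp, hfix, -⟩ := hper e hle
      simp only [Set.mem_iUnion, Finset.mem_range] at hp
      obtain ⟨m', hm', b', hb', hpb⟩ := hp
      have hinj : Function.Injective ((f : X → X)^[m']) := f.injective.iterate m'
      have hb'fix : (f : X → X)^[l e] b' = b' := by
        apply hinj
        rw [← Function.iterate_add_apply, Nat.add_comm, Function.iterate_add_apply,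
          hpb, hfix, ← hpb]
      refine ⟨(f : X → X)^[m] b', ⟨l e, hpos e, hle, ?_⟩, ?_⟩
      · rw [← Function.iterate_add_apply, Nat.add_comm, Function.iterate_add_apply, hb'fix]
      · have hbd : Bornology.IsBounded ((f : X → X)^[m] '' B e) := Metric.isBounded_of_compactSpace
        exact le_trans
          (Metric.dist_le_diam_of_mem hbd ⟨b, hb, hbx⟩ ⟨b', hb', rfl⟩) (hdiam e m hm)
    ·
      push_neg at hle
      refine absurd ?_ hx
      set n := l e - 1 - L with hn
      set s0 := n % (L + 1) with hs0
      obtain ⟨d, hd⟩ : ∃ d, (L + 1) * d + s0 = n := ⟨n / (L + 1), Nat.div_add_mod n (L + 1)⟩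
      have hs0L : s0 < L + 1 := Nat.mod_lt _ (by omega)
      rcases lt_or_ge m s0 with hms | hms
      · -- x is below the lowest marker: go backwards
        have hPs0 : P e s0 := ⟨hle, by omega, ⟨d, Nat.sub_eq_of_eq_add hd.symm⟩⟩
        refine Set.mem_iUnion.mpr ⟨(m : ℤ) - s0, Set.mem_iUnion.mpr ⟨?_, ?_⟩⟩
        · rw [Finset.mem_Icc]; omega
        · refine ⟨(f : X → X)^[s0] b, hmemF e s0 (by omega) hPs0 ⟨b, hb, rfl⟩, ?_⟩
          rw [← krieger_zpow_apply f s0 b, ← Equiv.Perm.mul_apply, ← zpow_add]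
          have hcast : (m : ℤ) - s0 + s0 = (m : ℤ) := by ring
          rw [hcast, krieger_zpow_apply, hbx]
      · -- x is above the lowest marker: go forwards from a marker
        obtain ⟨q, i, hqi, hiL⟩ : ∃ q i, (L + 1) * q + i = m - s0 ∧ i < L + 1 :=
          ⟨_, _, Nat.div_add_mod _ _, Nat.mod_lt _ (by omega)⟩
        have hsub : m - s0 + s0 = m := Nat.sub_add_cancel hms
        have hsm : s0 + (L + 1) * q + i = m := by
          calc s0 + (L + 1) * q + i = (L + 1) * q + i + s0 := by ring
            _ = m - s0 + s0 := by rw [hqi]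
            _ = m := hsub
        have hqd : q ≤ d := by
          by_contra hqd
          push_neg at hqd
          have h1 : (L + 1) * (d + 1) ≤ (L + 1) * q := Nat.mul_le_mul_left _ hqd
          rw [Nat.mul_add, Nat.mul_one] at h1
          have h2 : s0 + (L + 1) * q + i ≤ l e - 1 := by omega
          have h3 : (L + 1) * d + s0 = n := hd
          linarith [hsm, h3, hn ▸ (by omega : n + L + 1 = l e)]
        obtain ⟨t, rfl⟩ := Nat.le.dest hqd
        rw [Nat.mul_add] at hd
        have hsn : s0 + (L + 1) * q + (L + 1) * t = n := by linarith
        have hPs : P e (s0 + (L + 1) * q) :=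
          ⟨hle, Nat.le.intro hsn, ⟨t, Nat.sub_eq_of_eq_add (by linarith)⟩⟩
        have hsl : s0 + (L + 1) * q < l e :=
          lt_of_le_of_lt (Nat.le.intro hsn) (by omega)
        have him : i + (s0 + (L + 1) * q) = m := by rw [← hsm]; ring
        refine Set.mem_iUnion.mpr ⟨(i : ℤ), Set.mem_iUnion.mpr ⟨?_, ?_⟩⟩
        · rw [Finset.mem_Icc]; omega
        · refine ⟨(f : X → X)^[s0 + (L + 1) * q] b,
            hmemF e _ hsl hPs ⟨b, hb, rfl⟩, ?_⟩
          rw [krieger_zpow_apply, ← Function.iterate_add_apply, him, hbx]
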